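/- arXiv:2007.07127 — 4 statements merged into one kernel-verified Lean document; each statement's English description precedes it below -/
import Mathlib

section
/- (Non-identifiability of the treatment effect, moment form; Proposition 5.1) Assume α ≠ 0. Then there exist real parameters α', β', τ' and positive reals σ_U'², σ_T'², σ_Y'² with β' ≠ β such that all three second moments match: α'²σ_U'² + σ_T'² = α²σ_U² + σ_T², β'(α'²σ_U'² + σ_T'²) + τ'α'σ_U'² = β(α²σ_U² + σ_T²) + τασ_U², and β'²(α'²σ_U'² + σ_T'²) + 2β'τ'α'σ_U'² + τ'²σ_U'² + σ_Y'² = β²(α²σ_U² + σ_T²) + 2βτασ_U² + τ²σ_U² + σ_Y². -/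
open MeasureTheory ProbabilityTheory
open scoped NNReal

/-- **Proposition 5.1, moment form.** Non-identifiability of the
treatment effect: if `α ≠ 0`, there is an alternative parameter vector with a
different treatment effect `β' ≠ β` that matches all three second moments of `(T, Y)`. -/
theorem treatment_effect_nonidentifiable_moments
    (α β τ : ℝ) (σU2 σT2 σY2 : ℝ)
    (hσU : 0 < σU2) (hσT : 0 < σT2) (hσY : 0 < σY2)
    (hα : α ≠ 0) :
    ∃ (α' β' τ' σU2' σT2' σY2' : ℝ),
      0 < σU2' ∧ 0 < σT2' ∧ 0 < σY2' ∧ β' ≠ β ∧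
      α' ^ 2 * σU2' + σT2' = α ^ 2 * σU2 + σT2 ∧
      β' * (α' ^ 2 * σU2' + σT2') + τ' * α' * σU2'
        = β * (α ^ 2 * σU2 + σT2) + τ * α * σU2 ∧
      β' ^ 2 * (α' ^ 2 * σU2' + σT2') + 2 * β' * τ' * α' * σU2' + τ' ^ 2 * σU2' + σY2'
        = β ^ 2 * (α ^ 2 * σU2 + σT2) + 2 * β * τ * α * σU2 + τ ^ 2 * σU2 + σY2 := by
  set S : ℝ := α ^ 2 * σU2 + σT2 with hS
  have hα2 : (0:ℝ) < α ^ 2 := by positivity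
  have hSpos : 0 < S := by positivity
  set A : ℝ := S * σT2 / (α ^ 2 * σU2) with hA
  set B : ℝ := -2 * τ * σT2 / α with hB
  have hApos : 0 < A := by positivity
  set δ : ℝ := min 1 (σY2 / (2 * (A + |B|))) with hδ
  have hABpos : 0 < A + |B| := lt_of_lt_of_le hApos (le_add_of_nonneg_right (abs_nonneg _))
  have hδpos : 0 < δ := lt_min one_pos (by positivity)
  have hδle1 : δ ≤ 1 := min_le_left _ _
  have hδle : δ ≤ σY2 / (2 * (A + |B|)) := min_le_right _ _
  have hΔ : A * δ ^ 2 + B * δ < σY2 := by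
    have h1 : A * δ ^ 2 ≤ A * δ := by
      nlinarith [mul_le_mul_of_nonneg_left hδle1 (mul_nonneg hApos.le hδpos.le)]
    have h2 : B * δ ≤ |B| * δ := by
      exact mul_le_mul_of_nonneg_right (le_abs_self B) hδpos.le
    have h3 : (A + |B|) * δ ≤ σY2 / 2 := by
      calc (A + |B|) * δ ≤ (A + |B|) * (σY2 / (2 * (A + |B|))) :=
            mul_le_mul_of_nonneg_left hδle hABpos.le
        _ = σY2 / 2 := by field_simp
    nlinarith [hσY]
  refine ⟨α, β + δ, τ - δ * S / (α * σU2), σU2, σT2, σY2 - (A * δ ^ 2 + B * δ),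
    hσU, hσT, by linarith, ?_, rfl, ?_, ?_⟩
  · intro h
    have : δ = 0 := by linarith [add_left_cancel (a := β) (b := δ) (c := 0) (by linarith)]
    exact absurd this hδpos.ne'
  · field_simp
    ring
  · rw [hA, hB]
    field_simp
    ring
end

section
/- (Non-identifiability of the treatment effect, distributional form; Proposition 5.1) Assume α ≠ 0. For parameters (α, β, τ, σ_U², σ_T², σ_Y²), let μ(α, β, τ, σ_U², σ_T², σ_Y²) denote the pushforward to ℝ² of the product measure N(0, σ_U²) ⊗ N(0, σ_T²) ⊗ N(0, σ_Y²) under the map (u, e_t, e_y) ↦ (α·u + e_t, β·(α·u + e_t) + τ·u + e_y). Then there exist real parameters α', β', τ' and positive reals σ_U'², σ_T'², σ_Y'² with β' ≠ β such that μ(α, β, τ, σ_U², σ_T², σ_Y²) = μ(α', β', τ', σ_U'², σ_T'², σ_Y'²) as measures on ℝ². -/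
open MeasureTheory ProbabilityTheory
open scoped NNReal

open scoped ENNReal

lemma map_withDensity_comp {α β : Type*} [MeasurableSpace α] [MeasurableSpace β]
    (μ : Measure α) {g : α → β} (hg : Measurable g) {f : β → ℝ≥0∞} (hf : Measurable f) :
    Measure.map g (μ.withDensity (fun x => f (g x))) = (Measure.map g μ).withDensity f := by
  refine Measure.ext fun s hs => ?_
  rw [Measure.map_apply hg hs, withDensity_apply _ hs, withDensity_apply _ (hg hs),
    setLIntegral_map hs hf hg]

lemma gaussian_prod2 (v w : ℝ≥0) (hv : v ≠ 0) (hw : w ≠ 0) :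
    (gaussianReal 0 v).prod (gaussianReal 0 w) =
      (volume : Measure (ℝ × ℝ)).withDensity
        (fun p => gaussianPDF 0 v p.1 * gaussianPDF 0 w p.2) := by
  refine Measure.prod_eq (μ := gaussianReal 0 v) (ν := gaussianReal 0 w) fun s t hs ht => ?_
  rw [withDensity_apply _ (hs.prod ht), Measure.volume_eq_prod, ← Measure.prod_restrict,
    lintegral_prod_mul (measurable_gaussianPDF 0 v).aemeasurable
      (measurable_gaussianPDF 0 w).aemeasurable,
    gaussianReal_of_var_ne_zero 0 hv, gaussianReal_of_var_ne_zero 0 hw,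
    withDensity_apply _ hs, withDensity_apply _ ht]

lemma gaussian_prod3 (v1 v2 v3 : ℝ≥0) (h1 : v1 ≠ 0) (h2 : v2 ≠ 0) (h3 : v3 ≠ 0) :
    (gaussianReal 0 v1).prod ((gaussianReal 0 v2).prod (gaussianReal 0 v3)) =
      (volume : Measure (ℝ × ℝ × ℝ)).withDensity
        (fun p => gaussianPDF 0 v1 p.1 *
          (gaussianPDF 0 v2 p.2.1 * gaussianPDF 0 v3 p.2.2)) := by
  refine Measure.prod_eq (μ := gaussianReal 0 v1) (ν := (gaussianReal 0 v2).prod (gaussianReal 0 v3)) fun s t hs ht => ?_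
  rw [withDensity_apply _ (hs.prod ht), Measure.volume_eq_prod, ← Measure.prod_restrict,
    lintegral_prod_mul (measurable_gaussianPDF 0 v1).aemeasurable
      (show Measurable (fun y : ℝ × ℝ => gaussianPDF 0 v2 y.1 * gaussianPDF 0 v3 y.2) from
        ((measurable_gaussianPDF 0 v2).comp measurable_fst).mul
          ((measurable_gaussianPDF 0 v3).comp measurable_snd)).aemeasurable,
    gaussianReal_of_var_ne_zero 0 h1, withDensity_apply _ hs,
    gaussian_prod2 v2 v3 h2 h3, withDensity_apply _ ht]
noncomputable def mixMap (a b c d e f g h i : ℝ) : (ℝ × ℝ × ℝ) →ₗ[ℝ] (ℝ × ℝ × ℝ) where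
  toFun p := (a*p.1 + b*p.2.1 + c*p.2.2, d*p.1 + e*p.2.1 + f*p.2.2, g*p.1 + h*p.2.1 + i*p.2.2)
  map_add' p q := by
    refine Prod.ext ?_ (Prod.ext ?_ ?_) <;> simp <;> ring
  map_smul' r p := by
    refine Prod.ext ?_ (Prod.ext ?_ ?_) <;> simp <;> ring

noncomputable def tripleEquiv : (ℝ × ℝ × ℝ) ≃ₗ[ℝ] (Fin 3 → ℝ) where
  toFun p := ![p.1, p.2.1, p.2.2]
  invFun v := (v 0, v 1, v 2)
  map_add' p q := by funext j; fin_cases j <;> simp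
  map_smul' r p := by funext j; fin_cases j <;> simp
  left_inv p := rfl
  right_inv v := by funext j; fin_cases j <;> simp

lemma mixMap_det (a b c d e f g h i : ℝ) :
    LinearMap.det (mixMap a b c d e f g h i) =
      a*e*i - a*f*h - b*d*i + b*f*g + c*d*h - c*e*g := by
  have h1 : (tripleEquiv.toLinearMap ∘ₗ mixMap a b c d e f g h i ∘ₗ tripleEquiv.symm.toLinearMap)
      = Matrix.toLin' !![a,b,c;d,e,f;g,h,i] := by
    apply LinearMap.ext; intro v
    funext j
    fin_cases j <;>
      simp [mixMap, tripleEquiv, Matrix.toLin'_apply, Matrix.mulVec, dotProduct,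
        Fin.sum_univ_three] <;> rfl
  have h2 := LinearMap.det_conj (mixMap a b c d e f g h i) tripleEquiv
  rw [← h2, h1, LinearMap.det_toLin', Matrix.det_fin_three]
  simp [Matrix.cons_val_zero, Matrix.cons_val_one]
instance : MeasureTheory.Measure.IsAddHaarMeasure (volume : Measure (ℝ × ℝ × ℝ)) := by
  rw [show (volume : Measure (ℝ × ℝ × ℝ)) = (volume : Measure ℝ).prod (volume : Measure (ℝ × ℝ))
      from Measure.volume_eq_prod ℝ (ℝ × ℝ),
    show (volume : Measure (ℝ × ℝ)) = (volume : Measure ℝ).prod (volume : Measure ℝ)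
      from Measure.volume_eq_prod ℝ ℝ]
  have : ((volume : Measure ℝ).prod (volume : Measure ℝ)).IsAddHaarMeasure := Measure.prod.instIsAddHaarMeasure _ _
  exact Measure.prod.instIsAddHaarMeasure _ _

lemma gaussian_pdfReal_mix (v1 v2 v3 V1 V2 V3 : ℝ≥0)
    (hv1 : v1 ≠ 0) (hv2 : v2 ≠ 0) (hv3 : v3 ≠ 0)
    (hV1 : V1 ≠ 0) (hV2 : V2 ≠ 0) (hV3 : V3 ≠ 0)
    {a b c d e f g h i D : ℝ} (hD : D ≠ 0)
    (hQ : ∀ x y z : ℝ, x^2/(v1:ℝ) + y^2/(v2:ℝ) + z^2/(v3:ℝ)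
        = (a*x+b*y+c*z)^2/(V1:ℝ) + (d*x+e*y+f*z)^2/(V2:ℝ) + (g*x+h*y+i*z)^2/(V3:ℝ))
    (hVVV : (V1:ℝ)*(V2:ℝ)*(V3:ℝ) = D^2 * ((v1:ℝ)*(v2:ℝ)*(v3:ℝ)))
    (x y z : ℝ) :
    gaussianPDFReal 0 v1 x * (gaussianPDFReal 0 v2 y * gaussianPDFReal 0 v3 z)
      = |D| * (gaussianPDFReal 0 V1 (a*x+b*y+c*z) *
          (gaussianPDFReal 0 V2 (d*x+e*y+f*z) * gaussianPDFReal 0 V3 (g*x+h*y+i*z))) := by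
  have pv1 : (0:ℝ) < v1 := NNReal.coe_pos.mpr (pos_iff_ne_zero.mpr hv1)
  have pv2 : (0:ℝ) < v2 := NNReal.coe_pos.mpr (pos_iff_ne_zero.mpr hv2)
  have pv3 : (0:ℝ) < v3 := NNReal.coe_pos.mpr (pos_iff_ne_zero.mpr hv3)
  have pV1 : (0:ℝ) < V1 := NNReal.coe_pos.mpr (pos_iff_ne_zero.mpr hV1)
  have pV2 : (0:ℝ) < V2 := NNReal.coe_pos.mpr (pos_iff_ne_zero.mpr hV2)
  have pV3 : (0:ℝ) < V3 := NNReal.coe_pos.mpr (pos_iff_ne_zero.mpr hV3)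
  have pi_pos := Real.pi_pos
  simp only [gaussianPDFReal, sub_zero]
  have hexp : Real.exp (-x ^ 2 / (2 * (v1:ℝ))) *
        (Real.exp (-y ^ 2 / (2 * (v2:ℝ))) * Real.exp (-z ^ 2 / (2 * (v3:ℝ))))
      = Real.exp (-(a*x+b*y+c*z) ^ 2 / (2 * (V1:ℝ))) *
        (Real.exp (-(d*x+e*y+f*z) ^ 2 / (2 * (V2:ℝ))) *
          Real.exp (-(g*x+h*y+i*z) ^ 2 / (2 * (V3:ℝ)))) := by
    rw [← Real.exp_add, ← Real.exp_add, ← Real.exp_add, ← Real.exp_add]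
    congr 1
    linear_combination (-1/2) * hQ x y z
  have hsq : Real.sqrt (2*Real.pi*(V1:ℝ)) *
        (Real.sqrt (2*Real.pi*(V2:ℝ)) * Real.sqrt (2*Real.pi*(V3:ℝ)))
      = |D| * (Real.sqrt (2*Real.pi*(v1:ℝ)) *
        (Real.sqrt (2*Real.pi*(v2:ℝ)) * Real.sqrt (2*Real.pi*(v3:ℝ)))) := by
    rw [← Real.sqrt_mul (by positivity), ← Real.sqrt_mul (by positivity),
      ← Real.sqrt_mul (by positivity), ← Real.sqrt_mul (by positivity),
      ← Real.sqrt_sq_eq_abs, ← Real.sqrt_mul (by positivity)]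
    congr 1
    linear_combination (2*Real.pi)^3 * hVVV
  have hinv0 : ∀ A B : ℝ, B = |D| * A → A⁻¹ = |D| * B⁻¹ := by
    intro A B hAB
    rw [hAB, mul_inv, ← mul_assoc, mul_inv_cancel₀ (abs_ne_zero.mpr hD), one_mul]
  have hinv := hinv0 _ _ hsq
  calc (Real.sqrt (2*Real.pi*(v1:ℝ)))⁻¹ * Real.exp (-x ^ 2 / (2 * (v1:ℝ))) *
        ((Real.sqrt (2*Real.pi*(v2:ℝ)))⁻¹ * Real.exp (-y ^ 2 / (2 * (v2:ℝ))) *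
          ((Real.sqrt (2*Real.pi*(v3:ℝ)))⁻¹ * Real.exp (-z ^ 2 / (2 * (v3:ℝ)))))
      = (Real.exp (-x ^ 2 / (2 * (v1:ℝ))) *
          (Real.exp (-y ^ 2 / (2 * (v2:ℝ))) * Real.exp (-z ^ 2 / (2 * (v3:ℝ))))) *
        (Real.sqrt (2*Real.pi*(v1:ℝ)) *
          (Real.sqrt (2*Real.pi*(v2:ℝ)) * Real.sqrt (2*Real.pi*(v3:ℝ))))⁻¹ := by
        rw [mul_inv, mul_inv]; ring
    _ = _ := by rw [hexp, hinv]; ring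
lemma gaussian_map_mix (v1 v2 v3 V1 V2 V3 : ℝ≥0)
    (hv1 : v1 ≠ 0) (hv2 : v2 ≠ 0) (hv3 : v3 ≠ 0)
    (hV1 : V1 ≠ 0) (hV2 : V2 ≠ 0) (hV3 : V3 ≠ 0)
    (a b c d e f g h i : ℝ)
    (hQ : ∀ x y z : ℝ, x^2/(v1:ℝ) + y^2/(v2:ℝ) + z^2/(v3:ℝ)
        = (a*x+b*y+c*z)^2/(V1:ℝ) + (d*x+e*y+f*z)^2/(V2:ℝ) + (g*x+h*y+i*z)^2/(V3:ℝ))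
    (hVVV : (V1:ℝ)*(V2:ℝ)*(V3:ℝ)
        = (a*e*i - a*f*h - b*d*i + b*f*g + c*d*h - c*e*g)^2 * ((v1:ℝ)*(v2:ℝ)*(v3:ℝ))) :
    Measure.map (fun p : ℝ × ℝ × ℝ =>
        (a*p.1 + b*p.2.1 + c*p.2.2, d*p.1 + e*p.2.1 + f*p.2.2, g*p.1 + h*p.2.1 + i*p.2.2))
      ((gaussianReal 0 v1).prod ((gaussianReal 0 v2).prod (gaussianReal 0 v3)))
      = (gaussianReal 0 V1).prod ((gaussianReal 0 V2).prod (gaussianReal 0 V3)) := by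
  set D : ℝ := a*e*i - a*f*h - b*d*i + b*f*g + c*d*h - c*e*g with hDdef
  have pv1 : (0:ℝ) < v1 := NNReal.coe_pos.mpr (pos_iff_ne_zero.mpr hv1)
  have pv2 : (0:ℝ) < v2 := NNReal.coe_pos.mpr (pos_iff_ne_zero.mpr hv2)
  have pv3 : (0:ℝ) < v3 := NNReal.coe_pos.mpr (pos_iff_ne_zero.mpr hv3)
  have pV1 : (0:ℝ) < V1 := NNReal.coe_pos.mpr (pos_iff_ne_zero.mpr hV1)
  have pV2 : (0:ℝ) < V2 := NNReal.coe_pos.mpr (pos_iff_ne_zero.mpr hV2)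
  have pV3 : (0:ℝ) < V3 := NNReal.coe_pos.mpr (pos_iff_ne_zero.mpr hV3)
  have hD : D ≠ 0 := by
    intro h
    rw [h] at hVVV
    nlinarith [mul_pos (mul_pos pV1 pV2) pV3]
  -- the map as a linear map
  have hfun : (fun p : ℝ × ℝ × ℝ =>
      (a*p.1 + b*p.2.1 + c*p.2.2, d*p.1 + e*p.2.1 + f*p.2.2, g*p.1 + h*p.2.1 + i*p.2.2))
      = ⇑(mixMap a b c d e f g h i) := rfl
  have hΦmeas : Measurable (fun p : ℝ × ℝ × ℝ =>
      (a*p.1 + b*p.2.1 + c*p.2.2, d*p.1 + e*p.2.1 + f*p.2.2, g*p.1 + h*p.2.1 + i*p.2.2)) := by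
    fun_prop
  have hGmeas : Measurable (fun p : ℝ × ℝ × ℝ =>
      gaussianPDF 0 V1 p.1 * (gaussianPDF 0 V2 p.2.1 * gaussianPDF 0 V3 p.2.2)) :=
    ((measurable_gaussianPDF 0 V1).comp measurable_fst).mul
      (((measurable_gaussianPDF 0 V2).comp (measurable_fst.comp measurable_snd)).mul
        ((measurable_gaussianPDF 0 V3).comp (measurable_snd.comp measurable_snd)))
  rw [gaussian_prod3 v1 v2 v3 hv1 hv2 hv3, gaussian_prod3 V1 V2 V3 hV1 hV2 hV3]
  have hpoint : (fun p : ℝ × ℝ × ℝ =>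
        gaussianPDF 0 v1 p.1 * (gaussianPDF 0 v2 p.2.1 * gaussianPDF 0 v3 p.2.2))
      = fun p : ℝ × ℝ × ℝ =>
        (fun q : ℝ × ℝ × ℝ => ENNReal.ofReal |D| *
          (gaussianPDF 0 V1 q.1 * (gaussianPDF 0 V2 q.2.1 * gaussianPDF 0 V3 q.2.2)))
        ((fun p : ℝ × ℝ × ℝ =>
          (a*p.1 + b*p.2.1 + c*p.2.2, d*p.1 + e*p.2.1 + f*p.2.2, g*p.1 + h*p.2.1 + i*p.2.2)) p) := by
    funext p
    simp only [gaussianPDF]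
    rw [← ENNReal.ofReal_mul (gaussianPDFReal_nonneg 0 V2 _),
      ← ENNReal.ofReal_mul (gaussianPDFReal_nonneg 0 V1 _),
      ← ENNReal.ofReal_mul (abs_nonneg D),
      ← ENNReal.ofReal_mul (gaussianPDFReal_nonneg 0 v2 _),
      ← ENNReal.ofReal_mul (gaussianPDFReal_nonneg 0 v1 _)]
    exact congrArg ENNReal.ofReal
      (gaussian_pdfReal_mix v1 v2 v3 V1 V2 V3 hv1 hv2 hv3 hV1 hV2 hV3 hD hQ hVVV p.1 p.2.1 p.2.2)
  rw [hpoint, map_withDensity_comp volume hΦmeas (show Measurable (fun q : ℝ × ℝ × ℝ => ENNReal.ofReal |D| *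
      (gaussianPDF 0 V1 q.1 * (gaussianPDF 0 V2 q.2.1 * gaussianPDF 0 V3 q.2.2))) from
      measurable_const.mul hGmeas)]
  have hvolmap : Measure.map (fun p : ℝ × ℝ × ℝ =>
        (a*p.1 + b*p.2.1 + c*p.2.2, d*p.1 + e*p.2.1 + f*p.2.2, g*p.1 + h*p.2.1 + i*p.2.2))
      (volume : Measure (ℝ × ℝ × ℝ)) = ENNReal.ofReal |D⁻¹| • volume := by
    rw [hfun]
    have hdet : LinearMap.det (mixMap a b c d e f g h i) ≠ 0 := by
      rw [mixMap_det]; exact hD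
    have := Measure.map_linearMap_addHaar_eq_smul_addHaar
      (volume : Measure (ℝ × ℝ × ℝ)) hdet
    rwa [mixMap_det] at this
  rw [hvolmap, withDensity_smul_measure]
  have : (fun q : ℝ × ℝ × ℝ => ENNReal.ofReal |D| *
        (gaussianPDF 0 V1 q.1 * (gaussianPDF 0 V2 q.2.1 * gaussianPDF 0 V3 q.2.2)))
      = (ENNReal.ofReal |D|) • (fun q : ℝ × ℝ × ℝ =>
        gaussianPDF 0 V1 q.1 * (gaussianPDF 0 V2 q.2.1 * gaussianPDF 0 V3 q.2.2)) := rfl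
  rw [this, withDensity_smul' _ _ ENNReal.ofReal_ne_top, smul_smul,
    ← ENNReal.ofReal_mul (abs_nonneg _), abs_inv,
    inv_mul_cancel₀ (abs_ne_zero.mpr hD), ENNReal.ofReal_one, one_smul]

/-- The joint law of `(T, Y)` in the linear GP-SLC model with parameters
`(α, β, τ, σ_U², σ_T², σ_Y²)`: the pushforward to `ℝ²` of the product Gaussian
measure `N(0, σ_U²) ⊗ N(0, σ_T²) ⊗ N(0, σ_Y²)` under
`(u, e_t, e_y) ↦ (α·u + e_t, β·(α·u + e_t) + τ·u + e_y)`. -/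
noncomputable def jointLaw (α β τ : ℝ) (σU2 σT2 σY2 : ℝ≥0) : Measure (ℝ × ℝ) :=
  Measure.map
    (fun p : ℝ × ℝ × ℝ =>
      (α * p.1 + p.2.1, β * (α * p.1 + p.2.1) + τ * p.1 + p.2.2))
    ((gaussianReal 0 σU2).prod ((gaussianReal 0 σT2).prod (gaussianReal 0 σY2)))

set_option maxHeartbeats 2000000 in
/-- **Proposition 5.1, distributional form.** Non-identifiability of
the treatment effect: if `α ≠ 0`, there is an alternative parameter vector with
`β' ≠ β` inducing exactly the same joint law of `(T, Y)` on `ℝ²`. -/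
theorem treatment_effect_nonidentifiable_law
    (α β τ : ℝ) (σU2 σT2 σY2 : ℝ≥0)
    (hσU : 0 < σU2) (hσT : 0 < σT2) (hσY : 0 < σY2)
    (hα : α ≠ 0) :
    ∃ (α' β' τ' : ℝ) (σU2' σT2' σY2' : ℝ≥0),
      0 < σU2' ∧ 0 < σT2' ∧ 0 < σY2' ∧ β' ≠ β ∧
      jointLaw α β τ σU2 σT2 σY2 = jointLaw α' β' τ' σU2' σT2' σY2' := by
  classical
  obtain ⟨v1, hv1def⟩ : ∃ x : ℝ, x = (σU2:ℝ) := ⟨_, rfl⟩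
  obtain ⟨v2, hv2def⟩ : ∃ x : ℝ, x = (σT2:ℝ) := ⟨_, rfl⟩
  obtain ⟨v3, hv3def⟩ : ∃ x : ℝ, x = (σY2:ℝ) := ⟨_, rfl⟩
  have pv1 : 0 < v1 := hv1def ▸ NNReal.coe_pos.mpr hσU
  have pv2 : 0 < v2 := hv2def ▸ NNReal.coe_pos.mpr hσT
  have pv3 : 0 < v3 := hv3def ▸ NNReal.coe_pos.mpr hσY
  obtain ⟨θ, hθdef⟩ : ∃ x : ℝ, x = if τ = 1 then -1 else 1 := ⟨_, rfl⟩
  have hθ : θ ≠ 0 := by rw [hθdef]; by_cases hτ1 : τ = 1 <;> simp [hτ1]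
  have hτθ : 1 - τ*θ ≠ 0 := by
    rw [hθdef]
    by_cases hτ1 : τ = 1
    · simp [hτ1]
    · simp only [if_neg hτ1, mul_one]
      exact sub_ne_zero.mpr fun h => hτ1 h.symm
  obtain ⟨K, hKdef⟩ : ∃ x : ℝ, x = v1 + θ^2*v3 := ⟨_, rfl⟩
  have pK : 0 < K := by rw [hKdef]; positivity
  obtain ⟨Q, hQdef⟩ : ∃ x : ℝ, x = v2*K + α^2*θ^2*v1*v3 := ⟨_, rfl⟩
  have pQ : 0 < Q := by rw [hQdef]; positivity
  obtain ⟨R, hRdef⟩ : ∃ x : ℝ, x = θ^2*v2*v3 + α^2*θ^2*v1*v3 + v1*v2 := ⟨_, rfl⟩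
  have pR : 0 < R := by rw [hRdef]; positivity
  obtain ⟨ρ, hρdef⟩ : ∃ x : ℝ, x = (1-τ*θ)/Q := ⟨_, rfl⟩
  have hρ : ρ ≠ 0 := hρdef ▸ div_ne_zero hτθ pQ.ne'
  have pV3 : 0 < ρ^2*(v1*v2*v3*R) := by positivity
  have pQK : 0 < Q/K := by positivity
  refine ⟨α*v1/K, β - (1-τ*θ)*α*θ*v1*v3/Q,
    (τ*v1+θ*v3)/K + (1-τ*θ)*α*θ*v1*v3/Q*(α*v1/K),
    Real.toNNReal K, Real.toNNReal (Q/K), Real.toNNReal (ρ^2*(v1*v2*v3*R)),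
    Real.toNNReal_pos.mpr pK, Real.toNNReal_pos.mpr pQK, Real.toNNReal_pos.mpr pV3, ?_, ?_⟩
  · intro hcontra
    have hne : (1-τ*θ)*α*θ*v1*v3/Q ≠ 0 :=
      div_ne_zero
        (mul_ne_zero (mul_ne_zero (mul_ne_zero (mul_ne_zero hτθ hα) hθ) pv1.ne') pv3.ne')
        pQ.ne'
    exact hne (sub_eq_self.mp hcontra)
  · have hc1 : ((Real.toNNReal K):ℝ) = K := Real.coe_toNNReal _ pK.le
    have hc2 : ((Real.toNNReal (Q/K)):ℝ) = Q/K := Real.coe_toNNReal _ pQK.le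
    have hc3 : ((Real.toNNReal (ρ^2*(v1*v2*v3*R))):ℝ) = ρ^2*(v1*v2*v3*R) :=
      Real.coe_toNNReal _ pV3.le
    have hmix := gaussian_map_mix σU2 σT2 σY2
      (Real.toNNReal K) (Real.toNNReal (Q/K)) (Real.toNNReal (ρ^2*(v1*v2*v3*R)))
      hσU.ne' hσT.ne' hσY.ne'
      (Real.toNNReal_pos.mpr pK).ne' (Real.toNNReal_pos.mpr pQK).ne'
      (Real.toNNReal_pos.mpr pV3).ne'
      1 0 θ (α*θ^2*v3/K) 1 (-(α*θ*v1)/K) (-(ρ*(θ*v3*v2))) (ρ*(α*θ*v1*v3)) (ρ*(v1*v2))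
      (by
        intro x y z
        rw [hc1, hc2, hc3, ← hv1def, ← hv2def, ← hv3def]
        rw [hρdef, hRdef, hQdef, hKdef]
        have hτθ' : 1 - θ*τ ≠ 0 := by rwa [mul_comm θ τ]
        field_simp
        ring)
      (by
        rw [hc1, hc2, hc3, ← hv1def, ← hv2def, ← hv3def]
        rw [hρdef, hRdef, hQdef, hKdef]
        field_simp
        ring)
    have hΦmeas : Measurable (fun p : ℝ × ℝ × ℝ =>
        (1*p.1 + 0*p.2.1 + θ*p.2.2,
         (α*θ^2*v3/K)*p.1 + 1*p.2.1 + (-(α*θ*v1)/K)*p.2.2,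
         (-(ρ*(θ*v3*v2)))*p.1 + (ρ*(α*θ*v1*v3))*p.2.1 + (ρ*(v1*v2))*p.2.2)) := by fun_prop
    have hnewmeas : Measurable (fun p : ℝ × ℝ × ℝ =>
        ((α*v1/K)*p.1 + p.2.1,
         (β - (1-τ*θ)*α*θ*v1*v3/Q)*((α*v1/K)*p.1 + p.2.1)
           + ((τ*v1+θ*v3)/K + (1-τ*θ)*α*θ*v1*v3/Q*(α*v1/K))*p.1 + p.2.2)) := by fun_prop
    have hcomp : (fun p : ℝ × ℝ × ℝ =>
          (α*p.1 + p.2.1, β*(α*p.1 + p.2.1) + τ*p.1 + p.2.2))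
        = (fun p : ℝ × ℝ × ℝ =>
            ((α*v1/K)*p.1 + p.2.1,
             (β - (1-τ*θ)*α*θ*v1*v3/Q)*((α*v1/K)*p.1 + p.2.1)
               + ((τ*v1+θ*v3)/K + (1-τ*θ)*α*θ*v1*v3/Q*(α*v1/K))*p.1 + p.2.2))
          ∘ (fun p : ℝ × ℝ × ℝ =>
            (1*p.1 + 0*p.2.1 + θ*p.2.2,
             (α*θ^2*v3/K)*p.1 + 1*p.2.1 + (-(α*θ*v1)/K)*p.2.2,
             (-(ρ*(θ*v3*v2)))*p.1 + (ρ*(α*θ*v1*v3))*p.2.1 + (ρ*(v1*v2))*p.2.2)) := by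
      funext p
      refine Prod.ext ?_ ?_ <;>
        · simp only [Function.comp_apply]
          simp only [hρdef, hQdef, hKdef]
          field_simp
          ring
    rw [jointLaw, jointLaw, hcomp, ← Measure.map_map hnewmeas hΦmeas, hmix]
end

section
/- (Covariance of centered treatment and centered outcome; step of Theorem 5.3) For every j ∈ {1,…,k}, Cov(T'_j, Y'_j) = β·Var(T'_j) = β·(1 − 1/k)·σ_T². -/
open MeasureTheory ProbabilityTheory
open scoped NNReal


/-- Covariance of two real-valued random variables. -/
noncomputable def covariance {Ω : Type*} [MeasurableSpace Ω] (μ : Measure Ω) (X Y : Ω → ℝ) : ℝ :=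
  ∫ ω, (X ω - ∫ x, X x ∂μ) * (Y ω - ∫ x, Y x ∂μ) ∂μ

section aux
open Real Filter Set Topology
open scoped ENNReal



section analysis

lemma aux_tendsto_exp_sq {b : ℝ} (hb : 0 < b) :
    Tendsto (fun x : ℝ => Real.exp (-b * x ^ 2)) atTop (𝓝 0) := by
  refine Real.tendsto_exp_atBot.comp ?_
  exact (tendsto_pow_atTop two_ne_zero).const_mul_atTop_of_neg (neg_lt_zero.2 hb)

lemma aux_tendsto_mul_exp_sq {b : ℝ} (hb : 0 < b) :
    Tendsto (fun x : ℝ => x * Real.exp (-b * x ^ 2)) atTop (𝓝 0) := by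
  have h := rpow_mul_exp_neg_mul_sq_isLittleO_exp_neg hb 1
  have h2 : Tendsto (fun x : ℝ => Real.exp (-(1/2) * x)) atTop (𝓝 0) := by
    refine Real.tendsto_exp_atBot.comp ?_
    exact tendsto_id.const_mul_atTop_of_neg (by norm_num)
  have := h.trans_tendsto h2
  simpa [Real.rpow_one] using this

lemma aux_integrable_sq_mul_exp {b : ℝ} (hb : 0 < b) :
    Integrable (fun x : ℝ => x ^ 2 * Real.exp (-b * x ^ 2)) := by
  have := integrable_rpow_mul_exp_neg_mul_sq hb (s := 2) (by norm_num)
  refine this.congr ?_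
  filter_upwards with x
  rw [show ((2:ℝ)) = ((2:ℕ):ℝ) by norm_num, Real.rpow_natCast]

lemma integral_mul_exp_neg_mul_sq' {b : ℝ} (hb : 0 < b) :
    ∫ x : ℝ, x * Real.exp (-b * x ^ 2) = 0 := by
  have hderiv : ∀ x : ℝ, HasDerivAt (fun x : ℝ => -(2*b)⁻¹ * Real.exp (-b * x ^ 2))
      (x * Real.exp (-b * x ^ 2)) x := by
    intro x
    have h := (((hasDerivAt_pow 2 x).const_mul (-b)).exp).const_mul (-(2*b)⁻¹)
    refine h.congr_deriv ?_
    field_simp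
    ring
  have hbot : Tendsto (fun x : ℝ => -(2*b)⁻¹ * Real.exp (-b * x ^ 2)) atBot (𝓝 (-(2*b)⁻¹ * 0)) := by
    refine Tendsto.const_mul _ ?_
    have h := (aux_tendsto_exp_sq hb).comp tendsto_neg_atBot_atTop
    refine h.congr fun x => ?_
    simp [Function.comp, neg_sq]
  have htop : Tendsto (fun x : ℝ => -(2*b)⁻¹ * Real.exp (-b * x ^ 2)) atTop (𝓝 (-(2*b)⁻¹ * 0)) :=
    Tendsto.const_mul _ (aux_tendsto_exp_sq hb)
  have := MeasureTheory.integral_of_hasDerivAt_of_tendsto hderiv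
    (integrable_mul_exp_neg_mul_sq hb) hbot htop
  simpa using this

lemma integral_sq_mul_exp_neg_mul_sq {b : ℝ} (hb : 0 < b) :
    ∫ x : ℝ, x ^ 2 * Real.exp (-b * x ^ 2) = (2*b)⁻¹ * Real.sqrt (π / b) := by
  have hderiv : ∀ x : ℝ, HasDerivAt (fun x : ℝ => -(2*b)⁻¹ * x * Real.exp (-b * x ^ 2))
      (x ^ 2 * Real.exp (-b * x ^ 2) - (2*b)⁻¹ * Real.exp (-b * x ^ 2)) x := by
    intro x
    have h1 : HasDerivAt (fun x : ℝ => -(2*b)⁻¹ * x) (-(2*b)⁻¹) x := by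
      simpa using (hasDerivAt_id x).const_mul (-(2*b)⁻¹)
    have h2 : HasDerivAt (fun x : ℝ => Real.exp (-b * x ^ 2))
        (Real.exp (-b * x ^ 2) * (-b * (2 * x))) x := by
      have := ((hasDerivAt_pow 2 x).const_mul (-b)).exp
      simpa [mul_comm, mul_assoc] using this
    have := h1.mul h2
    refine this.congr_deriv ?_
    field_simp
    ring
  have hint : Integrable (fun x : ℝ =>
      x ^ 2 * Real.exp (-b * x ^ 2) - (2*b)⁻¹ * Real.exp (-b * x ^ 2)) :=
    (aux_integrable_sq_mul_exp hb).sub ((integrable_exp_neg_mul_sq hb).const_mul _)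
  have hbot : Tendsto (fun x : ℝ => -(2*b)⁻¹ * x * Real.exp (-b * x ^ 2)) atBot (𝓝 0) := by
    have h := ((aux_tendsto_mul_exp_sq hb).const_mul ((2*b)⁻¹)).comp tendsto_neg_atBot_atTop
    simp only [mul_zero] at h
    refine h.congr fun x => ?_
    simp only [Function.comp]
    ring_nf
  have htop : Tendsto (fun x : ℝ => -(2*b)⁻¹ * x * Real.exp (-b * x ^ 2)) atTop (𝓝 0) := by
    have := (aux_tendsto_mul_exp_sq hb).const_mul (-(2*b)⁻¹)
    simp only [mul_zero] at this
    refine this.congr fun x => by ring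
  have h0 := MeasureTheory.integral_of_hasDerivAt_of_tendsto hderiv hint hbot htop
  rw [sub_zero] at h0
  have hsub := MeasureTheory.integral_sub (aux_integrable_sq_mul_exp hb)
    ((integrable_exp_neg_mul_sq hb).const_mul ((2*b)⁻¹))
  rw [hsub] at h0
  have : ∫ x : ℝ, (2*b)⁻¹ * Real.exp (-b * x ^ 2) = (2*b)⁻¹ * Real.sqrt (π / b) := by
    rw [MeasureTheory.integral_const_mul, integral_gaussian]
  linarith [h0, this]

end analysis




section gauss

variable {v : ℝ≥0}

lemma gaussianPDFReal_eq (hv : v ≠ 0) (x : ℝ) :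
    gaussianPDFReal 0 v x = (Real.sqrt (2 * π * v))⁻¹ * Real.exp (-(2*(v:ℝ))⁻¹ * x ^ 2) := by
  have hv' : (0:ℝ) < v := by positivity
  rw [gaussianPDFReal]
  congr 1
  · congr 1
    field_simp
    simp
lemma integral_fun_gaussianReal (hv : v ≠ 0) (g : ℝ → ℝ) :
    ∫ x, g x ∂(gaussianReal 0 v) = ∫ x, gaussianPDFReal 0 v x * g x := by
  rw [gaussianReal_of_var_ne_zero _ hv]
  have hm : Measurable (fun x => (gaussianPDFReal 0 v x).toNNReal) :=
    (measurable_gaussianPDFReal 0 v).real_toNNReal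
  have : (volume.withDensity (gaussianPDF 0 v))
      = volume.withDensity (fun x => ((gaussianPDFReal 0 v x).toNNReal : ℝ≥0∞)) := rfl
  rw [this, integral_withDensity_eq_integral_smul hm]
  congr 1
  ext x
  simp [NNReal.smul_def, Real.coe_toNNReal _ (gaussianPDFReal_nonneg 0 v x)]

lemma integrable_fun_gaussianReal (hv : v ≠ 0) (g : ℝ → ℝ)
    (hg : Integrable (fun x => gaussianPDFReal 0 v x * g x) volume)
    (hgm : AEStronglyMeasurable g volume) :
    Integrable g (gaussianReal 0 v) := by
  rw [gaussianReal_of_var_ne_zero _ hv]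
  have hm : Measurable (fun x => (gaussianPDFReal 0 v x).toNNReal) :=
    (measurable_gaussianPDFReal 0 v).real_toNNReal
  have : (volume.withDensity (gaussianPDF 0 v))
      = volume.withDensity (fun x => ((gaussianPDFReal 0 v x).toNNReal : ℝ≥0∞)) := rfl
  rw [this, integrable_withDensity_iff_integrable_smul hm]
  refine hg.congr ?_
  filter_upwards with x
  simp [NNReal.smul_def, Real.coe_toNNReal _ (gaussianPDFReal_nonneg 0 v x)]

lemma integral_id_gaussianReal0 (hv : v ≠ 0) : ∫ x, x ∂(gaussianReal 0 v) = 0 := by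
  have hv' : (0:ℝ) < v := by positivity
  have hb : (0:ℝ) < (2*(v:ℝ))⁻¹ := by positivity
  rw [integral_fun_gaussianReal hv]
  have : ∀ x : ℝ, gaussianPDFReal 0 v x * x
      = (Real.sqrt (2 * π * v))⁻¹ * (x * Real.exp (-(2*(v:ℝ))⁻¹ * x ^ 2)) := by
    intro x; rw [gaussianPDFReal_eq hv]; ring
  simp_rw [this]
  rw [integral_const_mul, integral_mul_exp_neg_mul_sq' hb, mul_zero]

lemma integral_sq_gaussianReal0 (hv : v ≠ 0) : ∫ x, x ^ 2 ∂(gaussianReal 0 v) = v := by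
  have hv' : (0:ℝ) < v := by positivity
  have hb : (0:ℝ) < (2*(v:ℝ))⁻¹ := by positivity
  rw [integral_fun_gaussianReal hv]
  have : ∀ x : ℝ, gaussianPDFReal 0 v x * x ^ 2
      = (Real.sqrt (2 * π * v))⁻¹ * (x ^ 2 * Real.exp (-(2*(v:ℝ))⁻¹ * x ^ 2)) := by
    intro x; rw [gaussianPDFReal_eq hv]; ring
  simp_rw [this]
  rw [integral_const_mul, integral_sq_mul_exp_neg_mul_sq hb]
  have h1 : (2 * (2*(v:ℝ))⁻¹)⁻¹ = v := by
    rw [mul_inv, inv_inv]; field_simp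
  have h2 : π / (2*(v:ℝ))⁻¹ = 2 * π * v := by field_simp
  rw [h1, h2]
  have hs : Real.sqrt (2 * π * v) ≠ 0 := by
    refine (Real.sqrt_ne_zero' (x := 2 * π * v)).2 ?_
    positivity
  field_simp

lemma memℒp_two_id_gaussianReal (hv : v ≠ 0) : MemLp (id : ℝ → ℝ) 2 (gaussianReal 0 v) := by
  have hv' : (0:ℝ) < v := by positivity
  have hb : (0:ℝ) < (2*(v:ℝ))⁻¹ := by positivity
  rw [memLp_two_iff_integrable_sq aestronglyMeasurable_id]
  refine integrable_fun_gaussianReal hv _ ?_ ?_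
  · have : ∀ x : ℝ, gaussianPDFReal 0 v x * x ^ 2
        = (Real.sqrt (2 * π * v))⁻¹ * (x ^ 2 * Real.exp (-(2*(v:ℝ))⁻¹ * x ^ 2)) := by
      intro x; rw [gaussianPDFReal_eq hv]; ring
    simp_rw [id_eq, this]
    exact (aux_integrable_sq_mul_exp hb).const_mul _
  · exact (measurable_id.pow_const 2).aestronglyMeasurable

end gauss




section helpers

variable {Ω : Type*} [MeasureSpace Ω] [IsProbabilityMeasure (ℙ : Measure Ω)]

lemma memℒp_two_of_gaussian {X : Ω → ℝ} {v : ℝ≥0} (hv : v ≠ 0) (hm : Measurable X)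
    (hmap : Measure.map X ℙ = gaussianReal 0 v) : MemLp X 2 ℙ := by
  have h : MemLp id 2 (Measure.map X ℙ) := by
    rw [hmap]; exact memℒp_two_id_gaussianReal hv
  rwa [memLp_map_measure_iff aestronglyMeasurable_id hm.aemeasurable] at h

lemma mean_zero_of_gaussian {X : Ω → ℝ} {v : ℝ≥0} (hv : v ≠ 0) (hm : Measurable X)
    (hmap : Measure.map X ℙ = gaussianReal 0 v) : ∫ ω, X ω ∂ℙ = 0 := by
  have h : ∫ ω, X ω ∂ℙ = ∫ x, id x ∂(Measure.map X ℙ) :=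
    (integral_map hm.aemeasurable aestronglyMeasurable_id).symm
  rw [h, hmap]
  exact integral_id_gaussianReal0 hv

lemma sq_moment_of_gaussian {X : Ω → ℝ} {v : ℝ≥0} (hv : v ≠ 0) (hm : Measurable X)
    (hmap : Measure.map X ℙ = gaussianReal 0 v) : ∫ ω, X ω * X ω ∂ℙ = v := by
  have h : ∫ ω, X ω * X ω ∂ℙ = ∫ x, x * x ∂(Measure.map X ℙ) :=
    (integral_map hm.aemeasurable (measurable_id.mul measurable_id).aestronglyMeasurable).symm
  rw [h, hmap, ← integral_sq_gaussianReal0 hv]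
  congr 1; ext x; ring

lemma integrable_mul_of_memL2 {f g : Ω → ℝ} (hf : MemLp f 2 ℙ) (hg : MemLp g 2 ℙ) :
    Integrable (fun ω => f ω * g ω) ℙ := by
  have h := hg.smul (φ := f) hf (p := 2) (q := 2) (r := 1)
  rw [memLp_one_iff_integrable] at h
  exact h.congr (by filter_upwards with ω; simp [smul_eq_mul])

lemma integral_sum_mul_sum {n : ℕ} (f g : Fin n → Ω → ℝ)
    (h : ∀ i l, Integrable (fun ω => f i ω * g l ω) ℙ) :
    ∫ ω, (∑ i, f i ω) * (∑ l, g l ω) ∂ℙ = ∑ i, ∑ l, ∫ ω, f i ω * g l ω ∂ℙ := by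
  have : ∀ ω, (∑ i, f i ω) * (∑ l, g l ω) = ∑ i, ∑ l, f i ω * g l ω := by
    intro ω; rw [Finset.sum_mul_sum]
  simp_rw [this]
  rw [integral_finset_sum _ (fun i _ => integrable_finset_sum _ (fun l _ => h i l))]
  exact Finset.sum_congr rfl fun i _ => integral_finset_sum _ (fun l _ => h i l)

end helpers


end aux

/-- **step of Theorem 5.3.** The covariance of the centered treatment
and centered outcome satisfies `Cov(T'_j, Y'_j) = β·Var(T'_j) = β·(1 − 1/k)·σ_T²`. -/
theorem centered_covariance
    {Ω : Type*} [MeasureSpace Ω] [IsProbabilityMeasure (ℙ : Measure Ω)]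
    (k : ℕ) (hk : 2 ≤ k) (α β τ : ℝ) (σU2 σT2 σY2 : ℝ≥0)
    (hσU : 0 < σU2) (hσT : 0 < σT2) (hσY : 0 < σY2)
    (U : Ω → ℝ) (εT εY : Fin k → Ω → ℝ)
    (hmU : Measurable U) (hmεT : ∀ j, Measurable (εT j)) (hmεY : ∀ j, Measurable (εY j))
    (hIndep : iIndepFun
      (Sum.elim (fun _ : Unit => U) (Sum.elim εT εY)) ℙ)
    (hU : Measure.map U ℙ = gaussianReal 0 σU2)
    (hεT : ∀ j, Measure.map (εT j) ℙ = gaussianReal 0 σT2)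
    (hεY : ∀ j, Measure.map (εY j) ℙ = gaussianReal 0 σY2)
    (T Y Tc Yc : Fin k → Ω → ℝ)
    (hT : ∀ j ω, T j ω = α * U ω + εT j ω)
    (hY : ∀ j ω, Y j ω = β * T j ω + τ * U ω + εY j ω)
    (hTc : ∀ j ω, Tc j ω = T j ω - (1 / (k : ℝ)) * ∑ l, T l ω)
    (hYc : ∀ j ω, Yc j ω = Y j ω - (1 / (k : ℝ)) * ∑ l, Y l ω) :
    ∀ j, covariance ℙ (Tc j) (Yc j) = β * variance (Tc j) ℙ ∧
      covariance ℙ (Tc j) (Yc j) = β * ((1 - 1 / (k : ℝ)) * (σT2 : ℝ)) := by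
  intro j
  have hk0 : (k : ℝ) ≠ 0 := by positivity
  set c : ℝ := 1 / (k : ℝ) with hc
  have hck : c * (k : ℝ) = 1 := by rw [hc]; field_simp
  set w : Fin k → ℝ := fun i => (if i = j then (1:ℝ) else 0) - c with hw
  -- centering identity
  have key : ∀ (X' X : Fin k → Ω → ℝ) (Z : Ω → ℝ) (d : ℝ),
      (∀ l ω, X' l ω = d * Z ω + X l ω) →
      ∀ ω, X' j ω - c * ∑ l, X' l ω = ∑ i, w i * X i ω := by
    intro X' X Z d hX' ω
    have hsum : ∑ l, X' l ω = (k : ℝ) * (d * Z ω) + ∑ l, X l ω := by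
      simp_rw [hX']
      rw [Finset.sum_add_distrib, Finset.sum_const, Finset.card_univ, Fintype.card_fin,
        nsmul_eq_mul]
    have hrhs : ∑ i, w i * X i ω = X j ω - c * ∑ i, X i ω := by
      simp_rw [hw, sub_mul, Finset.sum_sub_distrib, ite_mul, one_mul, zero_mul,
        Finset.sum_ite_eq', Finset.mem_univ, if_pos, ← Finset.mul_sum]
    rw [hX' j ω, hsum, hrhs]
    have : c * ((k:ℝ) * (d * Z ω)) = d * Z ω := by
      rw [← mul_assoc, hck, one_mul]
    rw [mul_add, this]
    ring
  -- structural identities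
  have hTc' : Tc j = fun ω => ∑ i, w i * εT i ω := by
    funext ω
    rw [hTc j ω]
    exact key T εT U α hT ω
  have hYc' : Yc j = fun ω => β * (∑ i, w i * εT i ω) + ∑ i, w i * εY i ω := by
    funext ω
    rw [hYc j ω]
    have h1 : ∀ l ω, Y l ω = (β * α + τ) * U ω + (fun l ω => β * εT l ω + εY l ω) l ω := by
      intro l ω; rw [hY l ω, hT l ω]; ring
    have h2 := key Y (fun l ω => β * εT l ω + εY l ω) U (β * α + τ) h1 ω
    rw [h2]
    simp_rw [mul_add, Finset.sum_add_distrib, Finset.mul_sum]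
    congr 1
    exact Finset.sum_congr rfl fun i _ => by ring
  -- moments
  have hσT0 : σT2 ≠ 0 := hσT.ne'
  have hσY0 : σY2 ≠ 0 := hσY.ne'
  have hT2 : ∀ i, MemLp (εT i) 2 ℙ := fun i => memℒp_two_of_gaussian hσT0 (hmεT i) (hεT i)
  have hY2 : ∀ i, MemLp (εY i) 2 ℙ := fun i => memℒp_two_of_gaussian hσY0 (hmεY i) (hεY i)
  have hTmean : ∀ i, ∫ ω, εT i ω ∂ℙ = 0 := fun i => mean_zero_of_gaussian hσT0 (hmεT i) (hεT i)
  have hYmean : ∀ i, ∫ ω, εY i ω ∂ℙ = 0 := fun i => mean_zero_of_gaussian hσY0 (hmεY i) (hεY i)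
  -- independence facts
  have hindTT : ∀ i l, i ≠ l → IndepFun (εT i) (εT l) ℙ := by
    intro i l hil
    exact hIndep.indepFun (i := Sum.inr (Sum.inl i)) (j := Sum.inr (Sum.inl l)) (by simp [hil])
  have hindTY : ∀ i l, IndepFun (εT i) (εY l) ℙ := by
    intro i l
    exact hIndep.indepFun (i := Sum.inr (Sum.inl i)) (j := Sum.inr (Sum.inr l)) (by simp)
  have hTT : ∀ i l, ∫ ω, εT i ω * εT l ω ∂ℙ = if i = l then (σT2 : ℝ) else 0 := by
    intro i l
    by_cases hil : i = l
    · subst hil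
      rw [if_pos rfl]
      exact sq_moment_of_gaussian hσT0 (hmεT i) (hεT i)
    · rw [if_neg hil]
      have h := (hindTT i l hil).integral_mul_eq_mul_integral
        ((hT2 i).integrable one_le_two).aestronglyMeasurable ((hT2 l).integrable one_le_two).aestronglyMeasurable
      calc ∫ ω, εT i ω * εT l ω ∂ℙ = ∫ ω, (εT i * εT l) ω ∂ℙ := rfl
        _ = (∫ ω, εT i ω ∂ℙ) * ∫ ω, εT l ω ∂ℙ := h
        _ = 0 := by rw [hTmean i, hTmean l, mul_zero]
  have hTY : ∀ i l, ∫ ω, εT i ω * εY l ω ∂ℙ = 0 := by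
    intro i l
    have h := (hindTY i l).integral_mul_eq_mul_integral
      ((hT2 i).integrable one_le_two).aestronglyMeasurable ((hY2 l).integrable one_le_two).aestronglyMeasurable
    calc ∫ ω, εT i ω * εY l ω ∂ℙ = ∫ ω, (εT i * εY l) ω ∂ℙ := rfl
      _ = (∫ ω, εT i ω ∂ℙ) * ∫ ω, εY l ω ∂ℙ := h
      _ = 0 := by rw [hTmean i, hYmean l, mul_zero]
  -- weighted functions
  set f : Fin k → Ω → ℝ := fun i ω => w i * εT i ω with hf
  set g : Fin k → Ω → ℝ := fun i ω => w i * εY i ω with hg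
  have hf2 : ∀ i, MemLp (f i) 2 ℙ := fun i => (hT2 i).const_mul (w i)
  have hg2 : ∀ i, MemLp (g i) 2 ℙ := fun i => (hY2 i).const_mul (w i)
  have hff : ∀ i l, Integrable (fun ω => f i ω * f l ω) ℙ :=
    fun i l => integrable_mul_of_memL2 (hf2 i) (hf2 l)
  have hfg : ∀ i l, Integrable (fun ω => f i ω * g l ω) ℙ :=
    fun i l => integrable_mul_of_memL2 (hf2 i) (hg2 l)
  -- sum of squared weights
  have hw2 : ∑ i, w i * w i = 1 - c := by
    have h1 : ∀ i : Fin k, w i * w i =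
        (if i = j then (1:ℝ) else 0) - 2 * c * (if i = j then (1:ℝ) else 0) + c * c := by
      intro i
      by_cases h : i = j <;> simp [hw, h] <;> ring
    rw [Finset.sum_congr rfl fun i _ => h1 i]
    rw [Finset.sum_add_distrib, Finset.sum_sub_distrib, Finset.sum_ite_eq',
      ← Finset.mul_sum, Finset.sum_ite_eq', Finset.sum_const, Finset.card_univ,
      Fintype.card_fin, nsmul_eq_mul]
    simp only [Finset.mem_univ, if_pos]
    have : (k : ℝ) * (c * c) = c := by
      rw [hc]; field_simp
    rw [this]
    ring
  -- main integrals
  have hS1 : ∫ ω, (∑ i, f i ω) * (∑ l, f l ω) ∂ℙ = (1 - c) * (σT2 : ℝ) := by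
    rw [integral_sum_mul_sum f f hff]
    have : ∀ i l, ∫ ω, f i ω * f l ω ∂ℙ = w i * w l * ∫ ω, εT i ω * εT l ω ∂ℙ := by
      intro i l
      rw [← integral_const_mul]
      congr 1; funext ω; simp [hf]; ring
    simp_rw [this, hTT]
    rw [Finset.sum_congr rfl (fun i _ => ?_)]
    · rw [← Finset.sum_mul, hw2]
    · rw [Finset.sum_eq_single i]
      · rw [if_pos rfl]
      · intro l _ hli
        rw [if_neg (Ne.symm hli).elim, mul_zero]
      · intro h; exact absurd (Finset.mem_univ i) h
  have hS2 : ∫ ω, (∑ i, f i ω) * (∑ l, g l ω) ∂ℙ = 0 := by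
    rw [integral_sum_mul_sum f g hfg]
    have : ∀ i l, ∫ ω, f i ω * g l ω ∂ℙ = w i * w l * ∫ ω, εT i ω * εY l ω ∂ℙ := by
      intro i l
      rw [← integral_const_mul]
      congr 1; funext ω; simp [hf, hg]; ring
    simp_rw [this, hTY, mul_zero, Finset.sum_const_zero]
  have hfi : ∀ i, Integrable (f i) ℙ := fun i => (hf2 i).integrable one_le_two
  have hgi : ∀ i, Integrable (g i) ℙ := fun i => (hg2 i).integrable one_le_two
  have hETc : ∫ ω, Tc j ω ∂ℙ = 0 := by
    rw [hTc']
    rw [integral_finset_sum _ (fun i _ => hfi i)]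
    refine Finset.sum_eq_zero fun i _ => ?_
    rw [integral_const_mul, hTmean i, mul_zero]
  have hEYc : ∫ ω, Yc j ω ∂ℙ = 0 := by
    rw [hYc']
    have h1 : Integrable (fun ω => β * ∑ i, w i * εT i ω) ℙ :=
      (integrable_finset_sum _ (fun i _ => hfi i)).const_mul β
    have h2 : Integrable (fun ω => ∑ i, w i * εY i ω) ℙ :=
      integrable_finset_sum _ (fun i _ => hgi i)
    rw [integral_add h1 h2, integral_const_mul,
      integral_finset_sum _ (fun i _ => hfi i), integral_finset_sum _ (fun i _ => hgi i)]
    have z1 : ∑ i : Fin k, ∫ ω, w i * εT i ω ∂ℙ = 0 :=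
      Finset.sum_eq_zero fun i _ => by rw [integral_const_mul, hTmean i, mul_zero]
    have z2 : ∑ i : Fin k, ∫ ω, w i * εY i ω ∂ℙ = 0 :=
      Finset.sum_eq_zero fun i _ => by rw [integral_const_mul, hYmean i, mul_zero]
    rw [z1, z2, mul_zero, add_zero]
  have hcov : covariance ℙ (Tc j) (Yc j) = ∫ ω, Tc j ω * Yc j ω ∂ℙ := by
    rw [_root_.covariance, hETc, hEYc]
    simp only [sub_zero]
  have hF2 : MemLp (fun ω => ∑ i, f i ω) 2 ℙ := memLp_finset_sum _ (fun i _ => hf2 i)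
  have hG2 : MemLp (fun ω => ∑ i, g i ω) 2 ℙ := memLp_finset_sum _ (fun i _ => hg2 i)
  have hFF : Integrable (fun ω => (∑ i, f i ω) * (∑ l, f l ω)) ℙ :=
    integrable_mul_of_memL2 hF2 hF2
  have hFG : Integrable (fun ω => (∑ i, f i ω) * (∑ l, g l ω)) ℙ :=
    integrable_mul_of_memL2 hF2 hG2
  have hmain : ∫ ω, Tc j ω * Yc j ω ∂ℙ = β * ((1 - c) * (σT2 : ℝ)) := by
    have hpt : ∀ ω, Tc j ω * Yc j ω
        = β * ((∑ i, f i ω) * (∑ l, f l ω)) + (∑ i, f i ω) * (∑ l, g l ω) := by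
      intro ω
      simp only [hTc', hYc', hf, hg]
      ring
    simp_rw [hpt]
    rw [integral_add (hFF.const_mul β) hFG, integral_const_mul, hS1, hS2, add_zero]
  have hTc2 : MemLp (Tc j) 2 ℙ := by
    rw [hTc']
    exact memLp_finset_sum _ (fun i _ => hf2 i)
  have hvar : variance (Tc j) ℙ = (1 - c) * (σT2 : ℝ) := by
    rw [variance_eq_sub hTc2, hETc]
    have h : ∫ ω, (Tc j ^ 2) ω ∂ℙ = ∫ ω, (∑ i, f i ω) * (∑ l, f l ω) ∂ℙ := by
      congr 1
      funext ω
      simp only [Pi.pow_apply, hTc', hf]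
      ring
    rw [h, hS1]
    ring
  constructor
  · rw [hcov, hmain, hvar]
  · rw [hcov, hmain]
end

section
/- (Identification of the treatment effect from centered within-object data; Theorem 5.3) For every j ∈ {1,…,k}, the treatment-effect parameter is identified from the second moments of the centered variables: Var(T'_j) > 0 and β = Cov(T'_j, Y'_j) / Var(T'_j). -/
open MeasureTheory ProbabilityTheory
open scoped NNReal

open Real
open scoped ENNReal

lemma gaussian_integrable_sq {v : ℝ≥0} (hv : v ≠ 0) :
    Integrable (fun x : ℝ => x ^ 2) (gaussianReal 0 v) := by
  rw [gaussianReal_of_var_ne_zero 0 hv,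
    integrable_withDensity_iff (measurable_gaussianPDF 0 v)
      (Filter.Eventually.of_forall fun x => ENNReal.ofReal_lt_top)]
  have hb : (0:ℝ) < (2 * (v:ℝ))⁻¹ := by positivity
  have h := (integrable_rpow_mul_exp_neg_mul_sq hb (by norm_num : (-1:ℝ) < 2)).const_mul
    ((Real.sqrt (2 * π * v))⁻¹)
  refine h.congr (Filter.Eventually.of_forall fun x => ?_)
  have hx2 : x ^ (2:ℝ) = x ^ 2 := Real.rpow_two x
  simp only [gaussianPDF, gaussianPDFReal, ENNReal.toReal_ofReal
    (by positivity : (0:ℝ) ≤ (Real.sqrt (2 * π * v))⁻¹ * rexp (-(x - 0) ^ 2 / (2 * v)))]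
  rw [hx2]
  have hv' : (v:ℝ) ≠ 0 := by exact_mod_cast hv
  rw [show -(2 * (v:ℝ))⁻¹ * x ^ 2 = -(x - 0) ^ 2 / (2 * v) by field_simp; ring]
  ring

lemma gaussian_memLp2 {v : ℝ≥0} (hv : v ≠ 0) :
    MemLp (fun x : ℝ => x) 2 (gaussianReal 0 v) := by
  refine (memLp_two_iff_integrable_sq aestronglyMeasurable_id).2 ?_
  exact gaussian_integrable_sq hv

lemma mul_integrable {α : Type*} [MeasurableSpace α] {μ : Measure α} {X Y : α → ℝ}
    (hX : MemLp X 2 μ) (hY : MemLp Y 2 μ) : Integrable (fun ω => X ω * Y ω) μ := by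
  have h : MemLp (X • Y) 1 μ :=
    hY.smul (φ := X) (r := 1) hX
  have h2 := memLp_one_iff_integrable.1 h
  exact h2

lemma gaussian_second_moment_pos {v : ℝ≥0} (hv : v ≠ 0) :
    0 < (∫ x, x ^ 2 ∂gaussianReal 0 v) - (∫ x, x ∂gaussianReal 0 v) ^ 2 := by
  set γ := gaussianReal 0 v with hγ
  have hsq : Integrable (fun x => x ^ 2) γ := gaussian_integrable_sq hv
  have hid : Integrable (fun x : ℝ => x) γ := (gaussian_memLp2 hv).integrable one_le_two
  set m := ∫ x, x ∂γ with hm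
  have hkey : ∫ x, (x - m) ^ 2 ∂γ = (∫ x, x ^ 2 ∂γ) - m ^ 2 := by
    have he : ∀ x : ℝ, (x - m) ^ 2 = x ^ 2 - (2 * m) * x + m ^ 2 := fun x => by ring
    simp_rw [he]
    rw [integral_add (f := fun x => x ^ 2 - (2 * m) * x) (g := fun _ => m ^ 2)
        (hsq.sub (hid.const_mul (2*m))) (integrable_const _),
      integral_sub (f := fun x => x ^ 2) (g := fun x => (2 * m) * x) hsq (hid.const_mul (2*m)),
      integral_const_mul, integral_const]
    simp only [measure_univ, probReal_univ, ENNReal.toReal_one, smul_eq_mul, one_mul, ← hm]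
    ring
  by_contra hcon
  push_neg at hcon
  have hnn : 0 ≤ ∫ x, (x - m) ^ 2 ∂γ := integral_nonneg fun x => sq_nonneg _
  have h0 : ∫ x, (x - m) ^ 2 ∂γ = 0 := le_antisymm (by rw [hkey]; exact hcon) hnn
  have hintc : Integrable (fun x => (x - m) ^ 2) γ := by
    have he : ∀ x : ℝ, (x - m) ^ 2 = x ^ 2 - (2 * m) * x + m ^ 2 := fun x => by ring
    simp_rw [he]
    exact (hsq.sub (hid.const_mul (2*m))).add (integrable_const _)
  have hae := (integral_eq_zero_iff_of_nonneg (fun x => sq_nonneg (x - m)) hintc).1 h0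
  have hae' : ∀ᵐ x ∂γ, x = m := by
    filter_upwards [hae] with x hx
    have : (x - m) ^ 2 = 0 := hx
    have := pow_eq_zero_iff (n := 2) (by norm_num) |>.1 this
    linarith [sub_eq_zero.1 this]
  have hcompl : γ {m}ᶜ = 0 := by
    have h := ae_iff.1 hae'
    have hset : {x : ℝ | ¬ x = m} = ({m}ᶜ : Set ℝ) := by ext x; simp
    rwa [hset] at h
  have hsing : γ {m} = 0 := by
    rw [hγ, gaussianReal_of_var_ne_zero 0 hv,
      withDensity_apply _ (measurableSet_singleton m)]
    rw [setLIntegral_measure_zero _ _ (measure_singleton m)]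
  have : γ Set.univ = 0 := by
    have hle := measure_union_le (μ := γ) {m} {m}ᶜ
    rw [Set.union_compl_self, hsing, hcompl] at hle
    simp at hle
  have : (1 : ℝ≥0∞) = 0 := by rw [← measure_univ (μ := γ)]; exact this
  simp at this

lemma double_sum_eval {k : ℕ} (c : Fin k → ℝ) (q r : ℝ) :
    ∑ l : Fin k, ∑ m : Fin k, c l * c m * (q + if l = m then r else 0)
      = ((∑ l, c l) * (∑ l, c l)) * q + (∑ l, c l ^ 2) * r := by
  simp_rw [mul_add, Finset.sum_add_distrib, mul_ite, mul_zero, Finset.sum_ite_eq,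
    Finset.mem_univ, if_true]
  have h1 : ∀ l, ∑ m, c l * c m * q = c l * q * (∑ m, c m) := by
    intro l
    rw [Finset.mul_sum]
    exact Finset.sum_congr rfl fun m _ => by ring
  have h2 : ∀ l, c l * c l * r = c l ^ 2 * r := fun l => by ring
  simp_rw [h1, h2, ← Finset.sum_mul]
  ring

/-- **Theorem 5.3.** The treatment-effect parameter is identified
from the second moments of the centered variables: `Var(T'_j) > 0` and
`β = Cov(T'_j, Y'_j) / Var(T'_j)`. -/
theorem centered_identification
    {Ω : Type*} [MeasureSpace Ω] [IsProbabilityMeasure (ℙ : Measure Ω)]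
    (k : ℕ) (hk : 2 ≤ k) (α β τ : ℝ) (σU2 σT2 σY2 : ℝ≥0)
    (hσU : 0 < σU2) (hσT : 0 < σT2) (hσY : 0 < σY2)
    (U : Ω → ℝ) (εT εY : Fin k → Ω → ℝ)
    (hmU : Measurable U) (hmεT : ∀ j, Measurable (εT j)) (hmεY : ∀ j, Measurable (εY j))
    (hIndep : iIndepFun
      (Sum.elim (fun _ : Unit => U) (Sum.elim εT εY)) ℙ)
    (hU : Measure.map U ℙ = gaussianReal 0 σU2)
    (hεT : ∀ j, Measure.map (εT j) ℙ = gaussianReal 0 σT2)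
    (hεY : ∀ j, Measure.map (εY j) ℙ = gaussianReal 0 σY2)
    (T Y Tc Yc : Fin k → Ω → ℝ)
    (hT : ∀ j ω, T j ω = α * U ω + εT j ω)
    (hY : ∀ j ω, Y j ω = β * T j ω + τ * U ω + εY j ω)
    (hTc : ∀ j ω, Tc j ω = T j ω - (1 / (k : ℝ)) * ∑ l, T l ω)
    (hYc : ∀ j ω, Yc j ω = Y j ω - (1 / (k : ℝ)) * ∑ l, Y l ω) :
    ∀ j, 0 < variance (Tc j) ℙ ∧
      β = covariance ℙ (Tc j) (Yc j) / variance (Tc j) ℙ := by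
  intro j
  have hk0 : (k : ℝ) ≠ 0 := Nat.cast_ne_zero.2 (by omega)
  -- moments of the gaussian error laws
  set mT : ℝ := ∫ x, x ∂gaussianReal 0 σT2 with hmTdef
  set sT : ℝ := ∫ x, x ^ 2 ∂gaussianReal 0 σT2 with hsTdef
  set mY : ℝ := ∫ x, x ∂gaussianReal 0 σY2 with hmYdef
  -- L² membership of the errors
  have hL2T : ∀ l, MemLp (εT l) 2 ℙ := by
    intro l
    have h := gaussian_memLp2 hσT.ne'
    rw [← hεT l] at h
    exact (memLp_map_measure_iff h.aestronglyMeasurable (hmεT l).aemeasurable).1 h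
  have hL2Y : ∀ l, MemLp (εY l) 2 ℙ := by
    intro l
    have h := gaussian_memLp2 hσY.ne'
    rw [← hεY l] at h
    exact (memLp_map_measure_iff h.aestronglyMeasurable (hmεY l).aemeasurable).1 h
  -- means and second moments
  have hMeanT : ∀ l, ∫ ω, εT l ω ∂ℙ = mT := by
    intro l
    rw [hmTdef, ← hεT l, integral_map (hmεT l).aemeasurable measurable_id'.aestronglyMeasurable]
  have hMeanY : ∀ l, ∫ ω, εY l ω ∂ℙ = mY := by
    intro l
    rw [hmYdef, ← hεY l, integral_map (hmεY l).aemeasurable measurable_id'.aestronglyMeasurable]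
  have hSqT : ∀ l, ∫ ω, εT l ω ^ 2 ∂ℙ = sT := by
    intro l
    rw [hsTdef, ← hεT l,
      integral_map (hmεT l).aemeasurable (measurable_id'.pow_const 2).aestronglyMeasurable]
  -- independence consequences
  have hindTT : ∀ l m, l ≠ m → ∫ ω, εT l ω * εT m ω ∂ℙ = mT * mT := by
    intro l m hlm
    have h : IndepFun (εT l) (εT m) ℙ :=
      hIndep.indepFun (i := Sum.inr (Sum.inl l)) (j := Sum.inr (Sum.inl m)) (by simp [hlm])
    rw [show (∫ ω, εT l ω * εT m ω ∂ℙ) = (∫ ω, εT l ω ∂ℙ) * ∫ ω, εT m ω ∂ℙ from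
        h.integral_mul_eq_mul_integral (hmεT l).aestronglyMeasurable (hmεT m).aestronglyMeasurable,
      hMeanT l, hMeanT m]
  have hindTY : ∀ l m, ∫ ω, εT l ω * εY m ω ∂ℙ = mT * mY := by
    intro l m
    have h : IndepFun (εT l) (εY m) ℙ :=
      hIndep.indepFun (i := Sum.inr (Sum.inl l)) (j := Sum.inr (Sum.inr m)) (by simp)
    rw [show (∫ ω, εT l ω * εY m ω ∂ℙ) = (∫ ω, εT l ω ∂ℙ) * ∫ ω, εY m ω ∂ℙ from
        h.integral_mul_eq_mul_integral (hmεT l).aestronglyMeasurable (hmεY m).aestronglyMeasurable,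
      hMeanT l, hMeanY m]
  -- coefficients of the centering
  set c : Fin k → ℝ := fun l => (if l = j then (1:ℝ) else 0) - 1/(k:ℝ) with hc
  have hcsum : ∑ l, c l = 0 := by
    simp only [hc, Finset.sum_sub_distrib, Finset.sum_ite_eq', Finset.mem_univ, if_true,
      Finset.sum_const, Finset.card_univ, Fintype.card_fin, nsmul_eq_mul]
    field_simp
    ring
  have hcsq : ∑ l, c l ^ 2 = 1 - 1/(k:ℝ) := by
    have he : ∀ l, c l ^ 2 =
        ((if l = j then (1:ℝ) else 0) - 2 * (if l = j then (1:ℝ) else 0) * (1/(k:ℝ)))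
          + (1/(k:ℝ))^2 := by
      intro l
      by_cases h : l = j <;> simp [hc, h] <;> ring
    simp only [he, Finset.sum_add_distrib, Finset.sum_sub_distrib, Finset.sum_ite_eq',
      Finset.mem_univ, if_true, Finset.sum_const, Finset.card_univ, Fintype.card_fin,
      nsmul_eq_mul]
    have : ∑ l : Fin k, 2 * (if l = j then (1:ℝ) else 0) * (1/(k:ℝ))
        = 2 * (1/(k:ℝ)) := by
      simp [Finset.mul_sum, mul_ite, Finset.sum_ite_eq']
    rw [this]
    field_simp
    ring
  -- centered variables as linear combinations of errors
  have hTsum : ∀ ω, ∑ l, T l ω = (k:ℝ) * (α * U ω) + ∑ l, εT l ω := by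
    intro ω
    simp [hT, Finset.sum_add_distrib, Finset.card_univ]
  have hYsum : ∀ ω, ∑ l, Y l ω
      = β * (∑ l, T l ω) + (k:ℝ) * (τ * U ω) + ∑ l, εY l ω := by
    intro ω
    simp [hY, Finset.sum_add_distrib, Finset.card_univ, Finset.mul_sum, add_assoc]
  have hcT : ∀ ω, ∑ l, c l * εT l ω = εT j ω - (1/(k:ℝ)) * ∑ l, εT l ω := by
    intro ω
    simp [hc, sub_mul, Finset.sum_sub_distrib, ite_mul, Finset.sum_ite_eq', Finset.mul_sum]
  have hcY : ∀ ω, ∑ l, c l * εY l ω = εY j ω - (1/(k:ℝ)) * ∑ l, εY l ω := by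
    intro ω
    simp [hc, sub_mul, Finset.sum_sub_distrib, ite_mul, Finset.sum_ite_eq', Finset.mul_sum]
  have hTc' : ∀ ω, Tc j ω = ∑ l, c l * εT l ω := by
    intro ω
    rw [hTc, hT, hTsum, hcT]
    field_simp
    ring
  have hYc' : ∀ ω, Yc j ω = β * Tc j ω + ∑ l, c l * εY l ω := by
    intro ω
    rw [hYc, hY, hYsum, hcY, hTc, hTsum]
    field_simp
    ring
  -- L² membership of the centered variables
  have hL2Tc : MemLp (Tc j) 2 ℙ := by
    have h : MemLp (fun ω => ∑ l, c l * εT l ω) 2 ℙ :=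
      memLp_finset_sum _ fun l _ => (hL2T l).const_mul (c l)
    rwa [show Tc j = fun ω => ∑ l, c l * εT l ω from funext hTc']
  have hL2Z : MemLp (fun ω => ∑ l, c l * εY l ω) 2 ℙ :=
    memLp_finset_sum _ fun l _ => (hL2Y l).const_mul (c l)
  -- expectations of the centered variables
  have hETc : ∫ ω, Tc j ω ∂ℙ = 0 := by
    simp_rw [hTc']
    rw [integral_finset_sum _ fun l _ => ((hL2T l).integrable one_le_two).const_mul (c l)]
    simp_rw [integral_const_mul, hMeanT]
    rw [← Finset.sum_mul, hcsum, zero_mul]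
  have hEZ : ∫ ω, (∑ l, c l * εY l ω) ∂ℙ = 0 := by
    rw [integral_finset_sum _ fun l _ => ((hL2Y l).integrable one_le_two).const_mul (c l)]
    simp_rw [integral_const_mul, hMeanY]
    rw [← Finset.sum_mul, hcsum, zero_mul]
  have hEYc : ∫ ω, Yc j ω ∂ℙ = 0 := by
    simp_rw [hYc']
    rw [integral_add ((hL2Tc.integrable one_le_two).const_mul β)
      (integrable_finset_sum _ fun l _ => ((hL2Y l).integrable one_le_two).const_mul (c l))]
    rw [integral_const_mul, hETc, mul_zero, zero_add, hEZ]
  -- second moments via the double-sum expansion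
  have hEE : ∀ l m, ∫ ω, εT l ω * εT m ω ∂ℙ
      = mT * mT + (if l = m then sT - mT * mT else 0) := by
    intro l m
    by_cases h : l = m
    · subst h
      simp only [if_true]
      rw [show (∫ ω, εT l ω * εT l ω ∂ℙ) = ∫ ω, εT l ω ^ 2 ∂ℙ by
        congr 1; funext ω; ring, hSqT l]
      ring
    · rw [hindTT l m h, if_neg h]
      ring
  have hTT : ∫ ω, Tc j ω * Tc j ω ∂ℙ = (sT - mT * mT) * (1 - 1/(k:ℝ)) := by
    simp_rw [hTc']
    rw [show (fun ω => (∑ l, c l * εT l ω) * (∑ m, c m * εT m ω))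
        = fun ω => ∑ l, ∑ m, (c l * c m) * (εT l ω * εT m ω) from funext fun ω => by
      rw [Finset.sum_mul_sum]
      exact Finset.sum_congr rfl fun l _ => Finset.sum_congr rfl fun m _ => by ring]
    rw [integral_finset_sum _ fun l _ => integrable_finset_sum _ fun m _ =>
      (mul_integrable (hL2T l) (hL2T m)).const_mul (c l * c m)]
    have step : ∀ l, ∫ ω, ∑ m, (c l * c m) * (εT l ω * εT m ω) ∂ℙ
        = ∑ m, c l * c m * (mT * mT + if l = m then sT - mT * mT else 0) := by
      intro l
      rw [integral_finset_sum _ fun m _ =>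
        (mul_integrable (hL2T l) (hL2T m)).const_mul (c l * c m)]
      exact Finset.sum_congr rfl fun m _ => by rw [integral_const_mul, hEE l m]
    simp_rw [step]
    rw [double_sum_eval c (mT * mT) (sT - mT * mT), hcsum, hcsq]
    ring
  have hTZ : ∫ ω, Tc j ω * (∑ l, c l * εY l ω) ∂ℙ = 0 := by
    simp_rw [hTc']
    rw [show (fun ω => (∑ l, c l * εT l ω) * (∑ m, c m * εY m ω))
        = fun ω => ∑ l, ∑ m, (c l * c m) * (εT l ω * εY m ω) from funext fun ω => by
      rw [Finset.sum_mul_sum]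
      exact Finset.sum_congr rfl fun l _ => Finset.sum_congr rfl fun m _ => by ring]
    rw [integral_finset_sum _ fun l _ => integrable_finset_sum _ fun m _ =>
      (mul_integrable (hL2T l) (hL2Y m)).const_mul (c l * c m)]
    have step : ∀ l, ∫ ω, ∑ m, (c l * c m) * (εT l ω * εY m ω) ∂ℙ
        = ∑ m, c l * c m * (mT * mY + if l = m then (0:ℝ) else 0) := by
      intro l
      rw [integral_finset_sum _ fun m _ =>
        (mul_integrable (hL2T l) (hL2Y m)).const_mul (c l * c m)]
      refine Finset.sum_congr rfl fun m _ => ?_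
      rw [integral_const_mul, hindTY l m]
      simp
    simp_rw [step]
    rw [double_sum_eval c (mT * mY) 0, hcsum]
    ring
  have hTY : ∫ ω, Tc j ω * Yc j ω ∂ℙ = β * ((sT - mT * mT) * (1 - 1/(k:ℝ))) := by
    have hsplit : ∀ ω, Tc j ω * Yc j ω
        = β * (Tc j ω * Tc j ω) + Tc j ω * (∑ l, c l * εY l ω) := by
      intro ω
      rw [hYc' ω]
      ring
    simp_rw [hsplit]
    rw [integral_add (((mul_integrable hL2Tc hL2Tc).const_mul β))
      (mul_integrable hL2Tc hL2Z)]
    rw [integral_const_mul, hTT, hTZ]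
    ring
  -- variance and covariance values
  have hVar : variance (Tc j) ℙ = (sT - mT * mT) * (1 - 1/(k:ℝ)) := by
    rw [variance_eq_sub hL2Tc, hETc]
    rw [show (ℙ[(Tc j) ^ 2] : ℝ) = ∫ ω, Tc j ω * Tc j ω ∂ℙ by
      congr 1; funext ω; simp [pow_two]]
    rw [hTT]
    ring
  have hCov : covariance ℙ (Tc j) (Yc j) = β * ((sT - mT * mT) * (1 - 1/(k:ℝ))) := by
    unfold _root_.covariance
    rw [hETc, hEYc]
    simp_rw [sub_zero]
    exact hTY
  have hvpos : 0 < sT - mT * mT := by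
    have h := gaussian_second_moment_pos hσT.ne'
    rw [← hsTdef, ← hmTdef] at h
    nlinarith
  have hkpos : 0 < 1 - 1/(k:ℝ) := by
    have hk1 : (1:ℝ) < (k:ℝ) := by exact_mod_cast lt_of_lt_of_le one_lt_two hk
    rw [sub_pos, div_lt_one (by linarith)]
    exact hk1
  have hVpos : 0 < variance (Tc j) ℙ := by
    rw [hVar]; exact mul_pos hvpos hkpos
  refine ⟨hVpos, ?_⟩
  rw [hCov, hVar, mul_div_assoc, div_self (mul_pos hvpos hkpos).ne', mul_one]
end
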